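/- Let L/F be a finite separable extension, S a finite-dimensional F-subspace of L, and A a k-atom of S. Then dim_F(L) ≥ 2·dim_F(A) + κ_k(S). -/

import Mathlib

open Module Submodule

variable {F L : Type*} [Field F] [Field L] [Algebra F L]

/-- The boundary `∂_S X = dim(XS) - dim(X)` (as an integer). -/
noncomputable def deltaS (S X : Submodule F L) : ℤ :=
  (finrank F ↥(X * S) : ℤ) - finrank F ↥X

/-- Membership in the family `𝒳_k`: `k ≤ dim X < ∞` and `dim(XS) + k ≤ dim L`. -/
def InXk (k : ℕ) (S X : Submodule F L) : Prop :=
  FiniteDimensional F ↥X ∧ k ≤ finrank F ↥X ∧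
    ((finrank F ↥(X * S) + k : ℕ) : Cardinal) ≤ Module.rank F L

/-- A `k`-fragment of `S`: an element of `𝒳_k` attaining the minimum `κ_k(S)` of `∂_S`. -/
def IsFragment (k : ℕ) (S X : Submodule F L) : Prop :=
  InXk k S X ∧ ∀ Y : Submodule F L, InXk k S Y → deltaS S X ≤ deltaS S Y

/-- A `k`-atom of `S`: a `k`-fragment of minimum dimension. -/
def IsAtomk (k : ℕ) (S A : Submodule F L) : Prop :=
  IsFragment k S A ∧ ∀ B : Submodule F L, IsFragment k S B → finrank F ↥A ≤ finrank F ↥B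

theorem stmt5 [FiniteDimensional F L] [Algebra.IsSeparable F L]
    (S A : Submodule F L) (k : ℕ) (hA : IsAtomk k S A) :
    2 * (finrank F ↥A : ℤ) + deltaS S A ≤ (finrank F L : ℤ) := by
  obtain ⟨⟨⟨hAfd, hAk, hAdim⟩, hAmin⟩, hAatom⟩ := hA
  have hcast : ∀ n : ℕ, ((n : Cardinal) ≤ Module.rank F L) ↔ n ≤ finrank F L := by
    intro n
    rw [← Module.finrank_eq_rank F L, Nat.cast_le]
  have hASL : finrank F ↥(A * S) + k ≤ finrank F L := (hcast _).mp hAdim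
  set B := Algebra.traceForm F L with hB
  have hnd : B.Nondegenerate := traceForm_nondegenerate F L
  have hrefl : B.IsRefl := (Algebra.traceForm_isSymm (R := F) (S := L)).isRefl
  set Y := B.orthogonal (A * S) with hY
  have hYdim : finrank F ↥Y = finrank F L - finrank F ↥(A * S) :=
    LinearMap.BilinForm.finrank_orthogonal hnd _
  have hsub : Y * S ≤ B.orthogonal A := by
    rw [Submodule.mul_le]
    intro y hy s hs
    rw [LinearMap.BilinForm.mem_orthogonal_iff]
    intro a ha
    have h1 := hy (a * s) (Submodule.mul_mem_mul ha hs)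
    have h2 : B (a * s) y = 0 := h1
    show B a (y * s) = 0
    simp only [hB, Algebra.traceForm_apply] at h2 ⊢
    rw [show a * (y * s) = a * s * y by ring]
    exact h2
  have hYSdim : finrank F ↥(Y * S) ≤ finrank F L - finrank F ↥A := by
    calc finrank F ↥(Y * S) ≤ finrank F ↥(B.orthogonal A) :=
          Submodule.finrank_mono hsub
      _ = finrank F L - finrank F ↥A :=
          LinearMap.BilinForm.finrank_orthogonal hnd _
  have hAL : finrank F ↥A ≤ finrank F L := Submodule.finrank_le A
  have hYin : InXk k S Y := by
    refine ⟨inferInstance, ?_, ?_⟩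
    · omega
    · rw [hcast]; omega
  have hYfrag : IsFragment k S Y := by
    refine ⟨hYin, fun Z hZ => ?_⟩
    have h1 : deltaS S Y ≤ deltaS S A := by
      unfold deltaS
      omega
    exact h1.trans (hAmin Z hZ)
  have := hAatom Y hYfrag
  unfold deltaS
  omega
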